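/- Let a > 1 be coprime to 10, let n ≥ 2, and define the tetration tower T(1) = a, T(b+1) = a^(T(b)). If T(b+1) ≡ T(b) (mod 10^n) for some b with T(b) ≥ n (a height guaranteeing the tower exceeds n), then T(b+2) ≡ T(b+1) (mod 10^n). That is, once n digits are frozen at some height, they remain frozen at all greater heights. -/
import Mathlib

lemma aux_pow_one (a n : ℕ) (hcop : Nat.Coprime a 10) (hn : 2 ≤ n) :
    a ^ 10 ^ n ≡ 1 [MOD 10 ^ n] := by
  have h2 : Nat.Coprime a (2 ^ n) := (Nat.Coprime.pow_right n (hcop.coprime_dvd_right (by norm_num)))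
  have h5 : Nat.Coprime a (5 ^ n) := (Nat.Coprime.pow_right n (hcop.coprime_dvd_right (by norm_num)))
  have h10 : (10 : ℕ) ^ n = 2 ^ n * 5 ^ n := by rw [← Nat.mul_pow]
  have hcop25 : Nat.Coprime (2 ^ n) (5 ^ n) :=
    Nat.Coprime.pow n n (by norm_num)
  have key2 : a ^ 10 ^ n ≡ 1 [MOD 2 ^ n] := by
    have ht : Nat.totient (2 ^ n) = 2 ^ (n - 1) := by
      rw [Nat.totient_prime_pow Nat.prime_two (by omega)]; simp
    have hdvd : Nat.totient (2 ^ n) ∣ 10 ^ n := by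
      rw [ht, h10]
      exact Dvd.dvd.mul_right (pow_dvd_pow 2 (by omega)) _
    obtain ⟨k, hk⟩ := hdvd
    rw [hk, pow_mul]
    calc (a ^ Nat.totient (2 ^ n)) ^ k ≡ 1 ^ k [MOD 2 ^ n] :=
          (Nat.ModEq.pow_totient h2).pow k
      _ = 1 := one_pow k
  have key5 : a ^ 10 ^ n ≡ 1 [MOD 5 ^ n] := by
    have ht : Nat.totient (5 ^ n) = 4 * 5 ^ (n - 1) := by
      rw [Nat.totient_prime_pow (by norm_num) (by omega)]; ring
    have hdvd : Nat.totient (5 ^ n) ∣ 10 ^ n := by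
      rw [ht, h10]
      exact Nat.mul_dvd_mul (dvd_trans (by norm_num : (4:ℕ) ∣ 2 ^ 2) (pow_dvd_pow 2 hn))
        (pow_dvd_pow 5 (by omega))
    obtain ⟨k, hk⟩ := hdvd
    rw [hk, pow_mul]
    calc (a ^ Nat.totient (5 ^ n)) ^ k ≡ 1 ^ k [MOD 5 ^ n] :=
          (Nat.ModEq.pow_totient h5).pow k
      _ = 1 := one_pow k
  rw [h10]
  exact (Nat.modEq_and_modEq_iff_modEq_mul hcop25).mp ⟨h10 ▸ key2, h10 ▸ key5⟩

lemma aux_exp_cong (a M x y : ℕ) (hM : a ^ M ≡ 1 [MOD M]) (hxy : x ≡ y [MOD M]) :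
    a ^ x ≡ a ^ y [MOD M] := by
  wlog h : x ≤ y generalizing x y
  · exact (this y x hxy.symm (le_of_not_ge h)).symm
  obtain ⟨k, hk⟩ := (Nat.modEq_iff_dvd' h).mp hxy
  have hy : y = x + M * k := by omega
  subst hy
  rw [pow_add, pow_mul]
  have : a ^ x * (a ^ M) ^ k ≡ a ^ x * 1 ^ k [MOD M] := (Nat.ModEq.refl _).mul (hM.pow k)
  simpa using this.symm

theorem stmt8 (a n b : ℕ) (ha : 1 < a) (hcop : Nat.Coprime a 10) (hn : 2 ≤ n)
    (T : ℕ → ℕ) (hT1 : T 1 = a) (hT : ∀ b, T (b + 1) = a ^ T b)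
    (hb : n ≤ T b) (hfroz : T (b + 1) ≡ T b [MOD 10 ^ n]) :
    T (b + 2) ≡ T (b + 1) [MOD 10 ^ n] := by
  have key := aux_exp_cong a (10 ^ n) (T (b + 1)) (T b) (aux_pow_one a n hcop hn) hfroz
  rw [← hT b, ← hT (b + 1)] at key
  exact key
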